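/- Let a < b be real numbers, let μ be a finite signed Borel measure on (a,b), and let v : (a,b) → ℝ be a right-continuous function of bounded variation whose derivative measure is μ (i.e. v(y) − v(x) = μ((x,y]) for all a < x ≤ y < b). Let μ^- be the negative part of μ in the Jordan decomposition and let μ̃^- be its diffuse (non-atomic) part, i.e. μ^- restricted to the complement of its atoms. Then for μ̃^--a.e. x̄ ∈ (a,b) there exists δ > 0 such that v(x) > v(x̄) for all x ∈ (x̄ − δ, x̄) and v(x) < v(x̄) for all x ∈ (x̄, x̄ + δ). -/

import Mathlib

open MeasureTheory Measure Set
open scoped ENNReal NNReal Classical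

private lemma both_lt {I J : Set ℝ} (hI : I.OrdConnected) (hJ : J.OrdConnected)
    {t x y : ℝ} (htI : t ∈ I) (htJ : t ∈ J) (hxI : x ∈ I) (hyJ : y ∈ J)
    (hxJ : x ∉ J) (hyI : y ∉ I) (_hx : x < t) (hy : y < t) : False := by
  rcases le_total x y with h | h
  · exact hyI (hI.out hxI htI ⟨h, hy.le⟩)
  · exact hxJ (hJ.out hyJ htJ ⟨h, _hx.le⟩)

private lemma both_gt {I J : Set ℝ} (hI : I.OrdConnected) (hJ : J.OrdConnected)
    {t x y : ℝ} (htI : t ∈ I) (htJ : t ∈ J) (hxI : x ∈ I) (hyJ : y ∈ J)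
    (hxJ : x ∉ J) (hyI : y ∉ I) (hx : t < x) (hy : t < y) : False := by
  rcases le_total x y with h | h
  · exact hxJ (hJ.out htJ hyJ ⟨hx.le, h⟩)
  · exact hyI (hI.out htI hxI ⟨hy.le, h⟩)

private lemma triple_lemma {I J K : Set ℝ} (hI : I.OrdConnected) (hJ : J.OrdConnected)
    (hK : K.OrdConnected) {t : ℝ} (htI : t ∈ I) (htJ : t ∈ J) (htK : t ∈ K) :
    I ⊆ J ∪ K ∨ J ⊆ I ∪ K ∨ K ⊆ I ∪ J := by
  by_contra h
  push_neg at h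
  obtain ⟨h1, h2, h3⟩ := h
  obtain ⟨x, hxI, hxJK⟩ := Set.not_subset.mp h1
  obtain ⟨y, hyJ, hyIK⟩ := Set.not_subset.mp h2
  obtain ⟨z, hzK, hzIJ⟩ := Set.not_subset.mp h3
  have hxJ : x ∉ J := fun hh => hxJK (Or.inl hh)
  have hxK : x ∉ K := fun hh => hxJK (Or.inr hh)
  have hyI : y ∉ I := fun hh => hyIK (Or.inl hh)
  have hyK : y ∉ K := fun hh => hyIK (Or.inr hh)
  have hzI : z ∉ I := fun hh => hzIJ (Or.inl hh)
  have hzJ : z ∉ J := fun hh => hzIJ (Or.inr hh)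
  have hxt : x ≠ t := fun hh => hxJ (hh ▸ htJ)
  have hyt : y ≠ t := fun hh => hyI (hh ▸ htI)
  have hzt : z ≠ t := fun hh => hzI (hh ▸ htI)
  rcases lt_or_gt_of_ne hxt with hx | hx <;> rcases lt_or_gt_of_ne hyt with hy | hy <;>
    rcases lt_or_gt_of_ne hzt with hz | hz
  · exact both_lt hI hJ htI htJ hxI hyJ hxJ hyI hx hy
  · exact both_lt hI hJ htI htJ hxI hyJ hxJ hyI hx hy
  · exact both_lt hI hK htI htK hxI hzK hxK hzI hx hz
  · exact both_gt hJ hK htJ htK hyJ hzK hyK hzJ hy hz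
  · exact both_lt hJ hK htJ htK hyJ hzK hyK hzJ hy hz
  · exact both_gt hI hK htI htK hxI hzK hxK hzI hx hz
  · exact both_gt hI hJ htI htJ hxI hyJ hxJ hyI hx hy
  · exact both_gt hI hJ htI htJ hxI hyJ hxJ hyI hx hy

private lemma exists_subfamily : ∀ (N : ℕ) (F : Finset ℕ), F.card ≤ N → ∀ (I : ℕ → Set ℝ),
    (∀ k, (I k).OrdConnected) →
    ∃ G : Finset ℕ, G ⊆ F ∧ (⋃ k ∈ G, I k) = (⋃ k ∈ F, I k) ∧
      ∀ t : ℝ, (G.filter (fun k => t ∈ I k)).card ≤ 2 := by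
  intro N
  induction N with
  | zero =>
    intro F hF I _
    have hFe : F = ∅ := Finset.card_eq_zero.mp (Nat.le_zero.mp hF)
    exact ⟨∅, by simp [hFe], by simp [hFe], by simp⟩
  | succ N ih =>
    intro F hF I hord
    by_cases hred : ∃ k ∈ F, I k ⊆ ⋃ j ∈ F.erase k, I j
    · obtain ⟨k, hkF, hsub⟩ := hred
      obtain ⟨G, hG1, hG2, hG3⟩ := ih (F.erase k)
        (by have := Finset.card_erase_of_mem hkF; omega) I hord
      refine ⟨G, hG1.trans (Finset.erase_subset _ _), ?_, hG3⟩
      rw [hG2]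
      apply subset_antisymm
      · intro x hx
        obtain ⟨j, hj, hxj⟩ := Set.mem_iUnion₂.mp hx
        exact Set.mem_iUnion₂.mpr ⟨j, (Finset.mem_erase.mp hj).2, hxj⟩
      · intro x hx
        obtain ⟨j, hjF, hxj⟩ := Set.mem_iUnion₂.mp hx
        by_cases hjk : j = k
        · subst hjk; exact hsub hxj
        · exact Set.mem_iUnion₂.mpr ⟨j, Finset.mem_erase.mpr ⟨hjk, hjF⟩, hxj⟩
    · push_neg at hred
      refine ⟨F, Finset.Subset.refl F, rfl, ?_⟩
      intro t
      by_contra hcard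
      push_neg at hcard
      have pair : ∀ a' b' c' : ℕ, a' ∈ F → b' ∈ F → c' ∈ F → b' ≠ a' → c' ≠ a' →
          I a' ⊆ I b' ∪ I c' → False := by
        intro a' b' c' haF hbF hcF hba hca hsub
        apply hred a' haF
        intro x hx
        rcases hsub hx with h | h
        · exact Set.mem_iUnion₂.mpr ⟨b', Finset.mem_erase.mpr ⟨hba, hbF⟩, h⟩
        · exact Set.mem_iUnion₂.mpr ⟨c', Finset.mem_erase.mpr ⟨hca, hcF⟩, h⟩
      obtain ⟨i, j, k, hi, hj, hk, hij, hik, hjk⟩ := Finset.two_lt_card_iff.mp hcard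
      obtain ⟨hiF, hti⟩ := Finset.mem_filter.mp hi
      obtain ⟨hjF, htj⟩ := Finset.mem_filter.mp hj
      obtain ⟨hkF, htk⟩ := Finset.mem_filter.mp hk
      rcases triple_lemma (hord i) (hord j) (hord k) hti htj htk with h | h | h
      · exact pair i j k hiF hjF hkF hij.symm hik.symm h
      · exact pair j i k hjF hiF hkF hij hjk.symm h
      · exact pair k i j hkF hiF hjF hik hjk h

private lemma sum_le_two_mul (p : Measure ℝ) (U : Set ℝ) (hU : MeasurableSet U)
    (G : Finset ℕ) (I : ℕ → Set ℝ) (hmeas : ∀ k, MeasurableSet (I k))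
    (hsub : ∀ k ∈ G, I k ⊆ U)
    (hmult : ∀ t : ℝ, (G.filter (fun k => t ∈ I k)).card ≤ 2) :
    ∑ k ∈ G, p (I k) ≤ 2 * p U := by
  have h1 : ∀ k ∈ G, p (I k) = ∫⁻ x, (I k).indicator 1 x ∂p := by
    intro k _; rw [lintegral_indicator_one (hmeas k)]
  calc ∑ k ∈ G, p (I k) = ∑ k ∈ G, ∫⁻ x, (I k).indicator 1 x ∂p := Finset.sum_congr rfl h1
    _ = ∫⁻ x, ∑ k ∈ G, (I k).indicator 1 x ∂p :=
        (lintegral_finset_sum G (fun k _ => (measurable_one.indicator (hmeas k)))).symm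
    _ ≤ ∫⁻ x, U.indicator (fun _ => (2:ℝ≥0∞)) x ∂p := by
        apply lintegral_mono
        intro x
        dsimp only
        by_cases hx : x ∈ U
        · rw [Set.indicator_of_mem hx]
          have heq : ∑ k ∈ G, (I k).indicator (1 : ℝ → ℝ≥0∞) x
              = ((G.filter (fun k => x ∈ I k)).card : ℝ≥0∞) := by
            rw [Finset.card_eq_sum_ones, Nat.cast_sum, Finset.sum_filter]
            
            apply Finset.sum_congr rfl
            intro k _
            by_cases hxk : x ∈ I k <;> simp [Set.indicator_apply, hxk]
          rw [heq]
          exact_mod_cast Nat.cast_le.mpr (hmult x)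
        · have hz : ∀ k ∈ G, (I k).indicator (1 : ℝ → ℝ≥0∞) x = 0 := fun k hk =>
            Set.indicator_of_notMem (fun hxI => hx (hsub k hk hxI)) _
          rw [Finset.sum_congr rfl hz, Finset.sum_const_zero, Set.indicator_of_notMem hx]
    _ = 2 * p U := by rw [lintegral_indicator_const hU]

private lemma countable_null (n : Measure ℝ) (Z : Set ℝ) (hZc : Z.Countable)
    (h : ∀ x ∈ Z, n {x} = 0) : n Z = 0 := by
  have : Z = ⋃ x ∈ Z, {x} := (Set.biUnion_of_singleton Z).symm
  rw [this]
  exact (measure_biUnion_null_iff hZc).mpr h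

private lemma cover_bound (n p : Measure ℝ) (A U : Set ℝ) (hU : MeasurableSet U)
    (C : ℝ → Set ℝ)
    (hC : ∀ x ∈ A, (C x).OrdConnected ∧ MeasurableSet (C x) ∧ C x ⊆ U ∧ n (C x) ≤ p (C x))
    (T Z : Set ℝ) (hTA : T ⊆ A) (hTc : T.Countable) (hZA : Z ⊆ A) (hZc : Z.Countable)
    (hZnull : ∀ x ∈ Z, n {x} = 0)
    (hcov : A ⊆ (⋃ x ∈ T, C x) ∪ Z) :
    n A ≤ 2 * p U := by
  have hZ0 : n Z = 0 := countable_null n Z hZc hZnull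
  have key : n (⋃ x ∈ T, C x) ≤ 2 * p U := by
    rcases T.eq_empty_or_nonempty with rfl | hne
    · simp
    · obtain ⟨e, he⟩ := Set.Countable.exists_eq_range hTc hne
      have heA : ∀ i, e i ∈ A := fun i => hTA (he ▸ Set.mem_range_self i)
      have hrw : (⋃ x ∈ T, C x) = ⋃ i, C (e i) := by rw [he]; exact Set.biUnion_range
      rw [hrw]
      have hmono : Monotone (fun m => ⋃ k ∈ Finset.range m, C (e k)) := by
        intro m m' hmm x hx
        obtain ⟨k, hk, hxk⟩ := Set.mem_iUnion₂.mp hx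
        exact Set.mem_iUnion₂.mpr ⟨k, Finset.mem_range.mpr
          (lt_of_lt_of_le (Finset.mem_range.mp hk) hmm), hxk⟩
      have hun : (⋃ i, C (e i)) = ⋃ m, ⋃ k ∈ Finset.range m, C (e k) := by
        apply subset_antisymm
        · intro x hx
          obtain ⟨i, hi⟩ := Set.mem_iUnion.mp hx
          exact Set.mem_iUnion.mpr ⟨i+1, Set.mem_iUnion₂.mpr
            ⟨i, Finset.mem_range.mpr (Nat.lt_succ_self i), hi⟩⟩
        · intro x hx
          obtain ⟨m, hm⟩ := Set.mem_iUnion.mp hx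
          obtain ⟨k, _, hk⟩ := Set.mem_iUnion₂.mp hm
          exact Set.mem_iUnion.mpr ⟨k, hk⟩
      rw [hun, hmono.measure_iUnion]
      apply iSup_le
      intro m
      obtain ⟨G, hGsub, hGeq, hGmult⟩ := exists_subfamily (Finset.range m).card
        (Finset.range m) le_rfl (fun k => C (e k)) (fun k => (hC _ (heA k)).1)
      rw [← hGeq]
      calc n (⋃ k ∈ G, C (e k)) ≤ ∑ k ∈ G, n (C (e k)) := measure_biUnion_finset_le G _
        _ ≤ ∑ k ∈ G, p (C (e k)) := Finset.sum_le_sum (fun k _ => (hC _ (heA k)).2.2.2)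
        _ ≤ 2 * p U := sum_le_two_mul p U hU G _ (fun k => (hC _ (heA k)).2.1)
            (fun k _ => (hC _ (heA k)).2.2.1) hGmult
  calc n A ≤ n ((⋃ x ∈ T, C x) ∪ Z) := measure_mono hcov
    _ ≤ n (⋃ x ∈ T, C x) + n Z := measure_union_le _ _
    _ ≤ 2 * p U + 0 := add_le_add key (le_of_eq hZ0)
    _ = 2 * p U := add_zero _

private lemma exists_subcover_left (A : Set ℝ) (l : ℝ → ℝ) (hl : ∀ x ∈ A, l x < x) :
    ∃ T Z : Set ℝ, T ⊆ A ∧ T.Countable ∧ Z ⊆ A ∧ Z.Countable ∧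
      A ⊆ (⋃ x ∈ T, Set.Ioo (l x) x) ∪ Z := by
  obtain ⟨T', hT'c, hT'eq⟩ := TopologicalSpace.isOpen_iUnion_countable
      (fun x : A => Set.Ioo (l x) (x:ℝ)) (fun _ => isOpen_Ioo)
  set V : Set ℝ := ⋃ x : A, Set.Ioo (l x) (x:ℝ) with hV
  refine ⟨Subtype.val '' T', A \ V, ?_, hT'c.image _, Set.diff_subset, ?_, ?_⟩
  · rintro _ ⟨x, _, rfl⟩; exact x.2
  · have hsub : A \ V ⊆ ⋃ q : ℚ, {x | x ∈ A \ V ∧ l x < q ∧ (q:ℝ) < x} := by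
      intro x hx
      obtain ⟨q, hq1, hq2⟩ := exists_rat_btwn (hl x hx.1)
      exact Set.mem_iUnion.mpr ⟨q, hx, hq1, hq2⟩
    apply Set.Countable.mono hsub
    apply Set.countable_iUnion
    intro q
    apply Set.Subsingleton.countable
    intro x1 h1 x2 h2
    by_contra hne
    rcases lt_or_gt_of_ne hne with h | h
    · exact h1.1.2 (Set.mem_iUnion.mpr ⟨⟨x2, h2.1.1⟩, lt_trans h2.2.1 h1.2.2, h⟩)
    · exact h2.1.2 (Set.mem_iUnion.mpr ⟨⟨x1, h1.1.1⟩, lt_trans h1.2.1 h2.2.2, h⟩)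
  · intro x hx
    by_cases hxV : x ∈ V
    · left
      rw [← hT'eq] at hxV
      obtain ⟨i, hiT, hxm⟩ := Set.mem_iUnion₂.mp hxV
      exact Set.mem_iUnion₂.mpr ⟨(i:ℝ), ⟨i, hiT, rfl⟩, hxm⟩
    · exact Or.inr ⟨hx, hxV⟩

private lemma exists_subcover_right (A : Set ℝ) (r : ℝ → ℝ) (hr : ∀ x ∈ A, x < r x) :
    ∃ T Z : Set ℝ, T ⊆ A ∧ T.Countable ∧ Z ⊆ A ∧ Z.Countable ∧
      A ⊆ (⋃ x ∈ T, Set.Ioo x (r x)) ∪ Z := by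
  obtain ⟨T', hT'c, hT'eq⟩ := TopologicalSpace.isOpen_iUnion_countable
      (fun x : A => Set.Ioo (x:ℝ) (r x)) (fun _ => isOpen_Ioo)
  set V : Set ℝ := ⋃ x : A, Set.Ioo (x:ℝ) (r x) with hV
  refine ⟨Subtype.val '' T', A \ V, ?_, hT'c.image _, Set.diff_subset, ?_, ?_⟩
  · rintro _ ⟨x, _, rfl⟩; exact x.2
  · have hsub : A \ V ⊆ ⋃ q : ℚ, {x | x ∈ A \ V ∧ x < q ∧ (q:ℝ) < r x} := by
      intro x hx
      obtain ⟨q, hq1, hq2⟩ := exists_rat_btwn (hr x hx.1)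
      exact Set.mem_iUnion.mpr ⟨q, hx, hq1, hq2⟩
    apply Set.Countable.mono hsub
    apply Set.countable_iUnion
    intro q
    apply Set.Subsingleton.countable
    intro x1 h1 x2 h2
    by_contra hne
    rcases lt_or_gt_of_ne hne with h | h
    · exact h2.1.2 (Set.mem_iUnion.mpr ⟨⟨x1, h1.1.1⟩, h, lt_trans h2.2.1 h1.2.2⟩)
    · exact h1.1.2 (Set.mem_iUnion.mpr ⟨⟨x2, h2.1.1⟩, h, lt_trans h1.2.1 h2.2.2⟩)
  · intro x hx
    by_cases hxV : x ∈ V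
    · left
      rw [← hT'eq] at hxV
      obtain ⟨i, hiT, hxm⟩ := Set.mem_iUnion₂.mp hxV
      exact Set.mem_iUnion₂.mpr ⟨(i:ℝ), ⟨i, hiT, rfl⟩, hxm⟩
    · exact Or.inr ⟨hx, hxV⟩

/-- Let `v` be a right-continuous BV function on `(a,b)` with derivative
measure `μ = p − n` (Jordan decomposition). Then for a.e. point `x̄` with respect to the
diffuse part of the negative part `n` there is `δ > 0` with `v > v(x̄)` on `(x̄ − δ, x̄)`
and `v < v(x̄)` on `(x̄, x̄ + δ)`. -/
theorem stmt14 (a b : ℝ) (hab : a < b) (v : ℝ → ℝ)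
    (p n : Measure ℝ) [IsFiniteMeasure p] [IsFiniteMeasure n]
    (hsing : p ⟂ₘ n)
    (hderiv : ∀ x y : ℝ, a < x → x ≤ y → y < b →
      v y - v x = (p (Set.Ioc x y)).toReal - (n (Set.Ioc x y)).toReal) :
    ∀ᵐ xb ∂((n.restrict {x | n {x} = 0}).restrict (Set.Ioo a b)),
      ∃ δ > (0:ℝ), (∀ x ∈ Set.Ioo (xb - δ) xb, v xb < v x) ∧
        (∀ x ∈ Set.Ioo xb (xb + δ), v x < v xb) := by
  obtain ⟨S, hSm, hpS, hnS⟩ := hsing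
  have hatoms : Set.Countable {x : ℝ | n {x} ≠ 0} := by
    have h := Measure.countable_meas_pos_of_disjoint_iUnion (μ := n)
      (As := fun x : ℝ => {x}) (fun x => measurableSet_singleton x)
      (fun i j hij => by simp [Function.onFun, Set.disjoint_singleton, hij])
    have heq : {x : ℝ | n {x} ≠ 0} = {x : ℝ | 0 < n {x}} := by
      ext x; simp [pos_iff_ne_zero]
    rw [heq]; exact h
  have hD : MeasurableSet {x : ℝ | n {x} = 0} := by
    have heq : {x : ℝ | n {x} = 0} = {x : ℝ | n {x} ≠ 0}ᶜ := by ext x; simp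
    rw [heq]; exact hatoms.measurableSet.compl
  rw [ae_iff, Measure.restrict_apply' measurableSet_Ioo, Measure.restrict_apply' hD]
  set Am : Set ℝ := {x | x ∈ Set.Ioo a b ∧ n {x} = 0 ∧ x ∈ S ∧
    ∀ δ > (0:ℝ), ∃ y ∈ Set.Ioo (x - δ) x, v y ≤ v x} with hAmdef
  set Ap : Set ℝ := {x | x ∈ Set.Ioo a b ∧ n {x} = 0 ∧ x ∈ S ∧
    ∀ δ > (0:ℝ), ∃ y ∈ Set.Ioo x (x + δ), v x ≤ v y} with hApdef
  -- the bad set is contained in Am ∪ Ap ∪ Sᶜ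
  have hsplit : {xb | ¬∃ δ > (0:ℝ), (∀ x ∈ Set.Ioo (xb - δ) xb, v xb < v x) ∧
      (∀ x ∈ Set.Ioo xb (xb + δ), v x < v xb)} ∩ Set.Ioo a b ∩ {x : ℝ | n {x} = 0}
      ⊆ (Am ∪ Ap) ∪ Sᶜ := by
    rintro x ⟨⟨hxP, hxI⟩, hxD⟩
    by_cases hxS : x ∈ S
    · left
      by_cases hL : ∀ δ > (0:ℝ), ∃ y ∈ Set.Ioo (x - δ) x, v y ≤ v x
      · exact Or.inl ⟨hxI, hxD, hxS, hL⟩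
      · right
        refine ⟨hxI, hxD, hxS, ?_⟩
        push_neg at hL
        obtain ⟨δ1, hδ1, hall⟩ := hL
        intro δ hδ
        by_contra hcon
        push_neg at hcon
        refine hxP ⟨min δ1 δ, lt_min hδ1 hδ, ?_, ?_⟩
        · intro y hy
          exact hall y ⟨lt_of_le_of_lt (by linarith [min_le_left δ1 δ] : x - δ1 ≤ x - min δ1 δ) hy.1, hy.2⟩
        · intro y hy
          exact hcon y ⟨hy.1, lt_of_lt_of_le hy.2 (by linarith [min_le_right δ1 δ] : x + min δ1 δ ≤ x + δ)⟩
    · exact Or.inr hxS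
  have hAm : n Am = 0 := by
    refine le_antisymm ?_ zero_le
    refine ENNReal.le_of_forall_pos_le_add ?_
    intro ε hε _
    rw [zero_add]
    have hpAm : p Am = 0 := measure_mono_null (fun x hx => hx.2.2.1) hpS
    have hpos : (0:ℝ≥0∞) < ↑ε / 2 :=
      ENNReal.div_pos (by exact_mod_cast hε.ne') ENNReal.ofNat_ne_top
    obtain ⟨U, hAU, hUopen, hUp⟩ := Set.exists_isOpen_lt_of_lt Am (↑ε / 2)
      (by rw [hpAm]; exact hpos)
    have hex : ∀ x ∈ Am, ∃ lx, lx < x ∧ Set.Ioc lx x ⊆ U ∧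
        n (Set.Ioc lx x) ≤ p (Set.Ioc lx x) := by
      intro x hx
      have hxU := hAU hx
      obtain ⟨hxI, hxD, hxS, hbad⟩ := hx
      obtain ⟨δ, hδpos, hball⟩ := Metric.isOpen_iff.mp hUopen x hxU
      set δ' := min δ (x - a) with hδ'def
      have hδ'pos : 0 < δ' := lt_min hδpos (sub_pos.mpr hxI.1)
      obtain ⟨y, hy, hvy⟩ := hbad δ' hδ'pos
      have hay : a < y := by
        have h1 : δ' ≤ x - a := min_le_right _ _
        have h2 := hy.1
        linarith
      refine ⟨y, hy.2, ?_, ?_⟩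
      · intro z hz
        apply hball
        rw [Metric.mem_ball, Real.dist_eq, abs_lt]
        have h1 : δ' ≤ δ := min_le_left _ _
        have h2 := hy.1
        constructor <;> linarith [hz.1, hz.2, hδpos]
      · have hd := hderiv y x hay hy.2.le hxI.2
        have hle : (n (Set.Ioc y x)).toReal ≤ (p (Set.Ioc y x)).toReal := by linarith
        exact (ENNReal.toReal_le_toReal (measure_ne_top n _) (measure_ne_top p _)).mp hle
    choose! lf hl1 hl2 hl3 using hex
    obtain ⟨T, Z, hTA, hTc, hZA, hZc, hcov⟩ := exists_subcover_left Am lf hl1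
    have hbound := cover_bound n p Am U hUopen.measurableSet (fun x => Set.Ioc (lf x) x)
      (fun x hx => ⟨Set.ordConnected_Ioc, measurableSet_Ioc, hl2 x hx, hl3 x hx⟩)
      T Z hTA hTc hZA hZc (fun x hx => (hZA hx).2.1)
      (by
        intro x hx
        rcases hcov hx with h | h
        · left
          obtain ⟨y, hyT, hxy⟩ := Set.mem_iUnion₂.mp h
          exact Set.mem_iUnion₂.mpr ⟨y, hyT, Set.Ioo_subset_Ioc_self hxy⟩
        · exact Or.inr h)
    calc n Am ≤ 2 * p U := hbound
      _ ≤ 2 * (↑ε / 2) := mul_le_mul_right hUp.le 2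
      _ = ↑ε := ENNReal.mul_div_cancel' (fun h => absurd h two_ne_zero) (fun h => absurd h ENNReal.ofNat_ne_top)
  have hAp : n Ap = 0 := by
    refine le_antisymm ?_ zero_le
    refine ENNReal.le_of_forall_pos_le_add ?_
    intro ε hε _
    rw [zero_add]
    have hpAp : p Ap = 0 := measure_mono_null (fun x hx => hx.2.2.1) hpS
    have hpos : (0:ℝ≥0∞) < ↑ε / 2 :=
      ENNReal.div_pos (by exact_mod_cast hε.ne') ENNReal.ofNat_ne_top
    obtain ⟨U, hAU, hUopen, hUp⟩ := Set.exists_isOpen_lt_of_lt Ap (↑ε / 2)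
      (by rw [hpAp]; exact hpos)
    have hex : ∀ x ∈ Ap, ∃ rx, x < rx ∧ Set.Icc x rx ⊆ U ∧
        n (Set.Icc x rx) ≤ p (Set.Icc x rx) := by
      intro x hx
      have hxU := hAU hx
      obtain ⟨hxI, hxD, hxS, hbad⟩ := hx
      obtain ⟨δ, hδpos, hball⟩ := Metric.isOpen_iff.mp hUopen x hxU
      set δ' := min δ (b - x) with hδ'def
      have hδ'pos : 0 < δ' := lt_min hδpos (sub_pos.mpr hxI.2)
      obtain ⟨y, hy, hvy⟩ := hbad δ' hδ'pos
      have hyb : y < b := by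
        have h1 : δ' ≤ b - x := min_le_right _ _
        have h2 := hy.2
        linarith
      refine ⟨y, hy.1, ?_, ?_⟩
      · intro z hz
        apply hball
        rw [Metric.mem_ball, Real.dist_eq, abs_lt]
        have h1 : δ' ≤ δ := min_le_left _ _
        have h2 := hy.2
        constructor <;> linarith [hz.1, hz.2, hδpos]
      · have hd := hderiv x y hxI.1 hy.1.le hyb
        have hle : n (Set.Ioc x y) ≤ p (Set.Ioc x y) := by
          have h3 : (n (Set.Ioc x y)).toReal ≤ (p (Set.Ioc x y)).toReal := by linarith
          exact (ENNReal.toReal_le_toReal (measure_ne_top n _) (measure_ne_top p _)).mp h3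
        have h1 : n (Set.Icc x y) ≤ n (Set.Ioc x y) := by
          have hsub2 : Set.Icc x y ⊆ {x} ∪ Set.Ioc x y := by
            intro z hz
            rcases eq_or_lt_of_le hz.1 with h | h
            · exact Or.inl (by simp [← h])
            · exact Or.inr ⟨h, hz.2⟩
          calc n (Set.Icc x y) ≤ n ({x} ∪ Set.Ioc x y) := measure_mono hsub2
            _ ≤ n {x} + n (Set.Ioc x y) := measure_union_le _ _
            _ = n (Set.Ioc x y) := by rw [hxD, zero_add]
        exact h1.trans (hle.trans (measure_mono Set.Ioc_subset_Icc_self))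
    choose! rf hr1 hr2 hr3 using hex
    obtain ⟨T, Z, hTA, hTc, hZA, hZc, hcov⟩ := exists_subcover_right Ap rf hr1
    have hbound := cover_bound n p Ap U hUopen.measurableSet (fun x => Set.Icc x (rf x))
      (fun x hx => ⟨Set.ordConnected_Icc, measurableSet_Icc, hr2 x hx, hr3 x hx⟩)
      T Z hTA hTc hZA hZc (fun x hx => (hZA hx).2.1)
      (by
        intro x hx
        rcases hcov hx with h | h
        · left
          obtain ⟨y, hyT, hxy⟩ := Set.mem_iUnion₂.mp h
          exact Set.mem_iUnion₂.mpr ⟨y, hyT, Set.Ioo_subset_Icc_self hxy⟩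
        · exact Or.inr h)
    calc n Ap ≤ 2 * p U := hbound
      _ ≤ 2 * (↑ε / 2) := mul_le_mul_right hUp.le 2
      _ = ↑ε := ENNReal.mul_div_cancel' (fun h => absurd h two_ne_zero) (fun h => absurd h ENNReal.ofNat_ne_top)
  refine le_antisymm ?_ zero_le
  calc n ({xb | ¬∃ δ > (0:ℝ), (∀ x ∈ Set.Ioo (xb - δ) xb, v xb < v x) ∧
        (∀ x ∈ Set.Ioo xb (xb + δ), v x < v xb)} ∩ Set.Ioo a b ∩ {x : ℝ | n {x} = 0})
      ≤ n ((Am ∪ Ap) ∪ Sᶜ) := measure_mono hsplit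
    _ ≤ n (Am ∪ Ap) + n Sᶜ := measure_union_le _ _
    _ ≤ (n Am + n Ap) + n Sᶜ := add_le_add_left (measure_union_le _ _) _
    _ = 0 := by rw [hAm, hAp, hnS]; simp
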